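/- Let K be a commutative ring with unity, let v, w : ℤ → K, and let α, β ∈ ℤ. For all natural numbers m₁, m₂, and n, the V-Stirling numbers of the first kind satisfy the convolution identity c^V_{α,β}[m₁+m₂, n] = ∑_{k=0}^{n} c^V_{α+m₂,β}[m₁, n-k] · c^V_{α,β+m₁}[m₂, k]. -/

import Mathlib

open Finset Polynomial

variable {K : Type*} [CommRing K]

/-- Elementary symmetric function `e_t` of the entries of a list. -/
def esymmList : List K → ℕ → K
  | _, 0 => 1
  | [], _ + 1 => 0
  | a :: l, t + 1 => a * esymmList l t + esymmList l (t + 1)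

/-- Complete homogeneous symmetric function `h_t` of the entries of a list. -/
def hsymmList : List K → ℕ → K
  | _, 0 => 1
  | [], _ + 1 => 0
  | a :: l, t + 1 => a * hsymmList (a :: l) t + hsymmList l (t + 1)
  termination_by l t => (l.length, t)

/-- The V-Stirling number of the first kind
`c^V_{α,β}[n,k] = e_{n-k}(v(α+n-1)w(β), …, v(α)w(β+n-1))`,
set to `0` unless `0 ≤ k ≤ n`. -/
def cV (v w : ℤ → K) (α β n k : ℤ) : K :=
  if 0 ≤ k ∧ k ≤ n then
    esymmList (List.ofFn fun j : Fin n.toNat =>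
      v (α + n - 1 - (j : ℕ)) * w (β + (j : ℕ))) (n - k).toNat
  else 0

/-- The V-Stirling number of the second kind
`S^V_{α,β}[n,k] = h_{n-k}(v(α+k)w(β), …, v(α)w(β+k))`,
set to `0` unless `0 ≤ k ≤ n`. -/
def SV (v w : ℤ → K) (α β n k : ℤ) : K :=
  if 0 ≤ k ∧ k ≤ n then
    hsymmList (List.ofFn fun j : Fin (k.toNat + 1) =>
      v (α + k - (j : ℕ)) * w (β + (j : ℕ))) (n - k).toNat
  else 0

lemma esymmList_eq_zero (l : List K) : ∀ t : ℕ, l.length < t → esymmList l t = 0 := by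
  induction l with
  | nil => intro t ht; cases t with
    | zero => omega
    | succ t => rfl
  | cons a l ih =>
    intro t ht
    cases t with
    | zero => omega
    | succ t =>
      simp only [List.length_cons] at ht
      rw [esymmList, ih t (by omega), ih (t+1) (by omega)]
      ring

lemma coeff_prodX (l : List K) : ∀ k : ℕ,
    ((l.map fun a => (X + C a)).prod).coeff k =
      if k ≤ l.length then esymmList l (l.length - k) else 0 := by
  induction l with
  | nil =>
    intro k
    simp only [List.map_nil, List.prod_nil, List.length_nil, coeff_one]
    rcases k with _ | k
    · simp [esymmList]
    · simp
  | cons a l ih =>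
    intro k
    rw [List.map_cons, List.prod_cons, add_mul, coeff_add, coeff_C_mul, ih k]
    rcases k with _ | j
    · simp only [mul_coeff_zero, coeff_X_zero, zero_mul, zero_add]
      simp only [List.length_cons, Nat.le_zero_eq, Nat.zero_le, if_true, Nat.sub_zero]
      rw [esymmList, esymmList_eq_zero l (l.length + 1) (by omega)]
      ring
    · rw [coeff_X_mul, ih j]
      simp only [List.length_cons]
      rcases lt_trichotomy j l.length with h | h | h
      · rw [if_pos (by omega), if_pos (by omega), if_pos (by omega)]
        have h1 : l.length + 1 - (j + 1) = l.length - j := by omega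
        have h2 : l.length - j = (l.length - (j+1)) + 1 := by omega
        rw [h1, h2, esymmList]
        ring
      · subst h
        rw [if_pos (by omega), if_neg (by omega), if_pos (by omega)]
        simp [esymmList]
      · rw [if_neg (by omega), if_neg (by omega), if_neg (by omega)]
        ring

lemma cV_eq_coeff (v w : ℤ → K) (α β : ℤ) (N k : ℕ) :
    cV v w α β (N : ℤ) (k : ℤ) =
      (((List.ofFn fun j : Fin N => v (α + (N : ℤ) - 1 - (j : ℕ)) * w (β + (j : ℕ))).map
        fun a => X + C a).prod).coeff k := by
  rw [coeff_prodX]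
  simp only [List.length_ofFn]
  unfold cV
  by_cases h : k ≤ N
  · rw [if_pos ⟨by positivity, by exact_mod_cast h⟩, if_pos h]
    have h1 : ((N : ℤ) - (k : ℤ)).toNat = N - k := by omega
    have h2 : ((N : ℤ)).toNat = N := by omega
    rw [h1]
    congr 1
  · rw [if_neg (by omega), if_neg h]

theorem cV_convolution (v w : ℤ → K) (α β : ℤ) (m₁ m₂ n : ℕ) :
    cV v w α β ((m₁ : ℕ) + (m₂ : ℕ)) (n : ℕ) =
      ∑ k ∈ Finset.range (n + 1),
        cV v w (α + (m₂ : ℕ)) β (m₁ : ℕ) ((n - k : ℕ)) *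
          cV v w α (β + (m₁ : ℕ)) (m₂ : ℕ) (k : ℕ) := by
  have key : (List.ofFn fun j : Fin (m₁ + m₂) =>
        v (α + ((m₁ + m₂ : ℕ) : ℤ) - 1 - (j : ℕ)) * w (β + (j : ℕ))) =
      (List.ofFn fun j : Fin m₁ =>
        v (α + (m₂ : ℤ) + (m₁ : ℤ) - 1 - (j : ℕ)) * w (β + (j : ℕ))) ++
      (List.ofFn fun j : Fin m₂ =>
        v (α + (m₂ : ℤ) - 1 - (j : ℕ)) * w (β + (m₁ : ℤ) + (j : ℕ))) := by
    rw [List.ofFn_add]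
    congr 1
    · refine congrArg List.ofFn (funext fun j => ?_)
      simp only [Fin.coe_castLE]
      push_cast
      ring_nf
    · refine congrArg List.ofFn (funext fun j => ?_)
      simp only [Fin.coe_natAdd]
      push_cast
      ring_nf
  have hcast : ((m₁ : ℤ) + (m₂ : ℤ)) = ((m₁ + m₂ : ℕ) : ℤ) := by push_cast; ring
  rw [show ((m₁ : ℕ) : ℤ) + ((m₂ : ℕ) : ℤ) = ((m₁ + m₂ : ℕ) : ℤ) from hcast]
  rw [cV_eq_coeff v w α β (m₁ + m₂) n, key, List.map_append, List.prod_append]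
  rw [mul_comm, Polynomial.coeff_mul, Finset.Nat.sum_antidiagonal_eq_sum_range_succ_mk]
  refine Finset.sum_congr rfl fun k hk => ?_
  rw [cV_eq_coeff v w (α + (m₂ : ℤ)) β m₁ (n - k), cV_eq_coeff v w α (β + (m₁ : ℤ)) m₂ k]
  rw [mul_comm]
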